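/- With Kashaev relations and D = bY_μY_ν + Z_μZ_ν invertible, set X_i' := Y_μ'Z_μ'⁻¹Y_ν'Z_ν'⁻¹ where Y_μ' = D⁻¹Z_ν, Z_μ' = bD⁻¹Y_μ, Y_ν' = D⁻¹Z_μ, Z_ν' = bD⁻¹Y_ν. Then X_i' = b⁻²q⁶ (Y_μZ_μ⁻¹Y_νZ_ν⁻¹)⁻¹. In particular, when b = q³, X_i' = X_i⁻¹ with X_i = Y_μZ_μ⁻¹Y_νZ_ν⁻¹. -/

import Mathlib

private lemma swap_comm' {A : Type*} [Ring A] (x x' z : A)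
    (h1 : x * x' = 1) (h2 : x' * x = 1) (h : z * x = x * z) :
    x' * z = z * x' := by
  have e : x' * z = x' * (z * x) * x' := by
    rw [← mul_assoc x' z x, mul_assoc (x' * z) x x', h1, mul_one]
  rw [e, h, ← mul_assoc x' x z, h2, one_mul]

private lemma swap_inv' {A : Type*} [Ring A] [Algebra ℂ A] (c : ℂ) (x x' z : A)
    (h1 : x * x' = 1) (h2 : x' * x = 1) (h : z * x = c • (x * z)) :
    x' * z = c • (z * x') := by
  have e : x' * z = x' * (z * x) * x' := by
    rw [← mul_assoc x' z x, mul_assoc (x' * z) x x', h1, mul_one]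
  rw [e, h, mul_smul_comm, smul_mul_assoc, ← mul_assoc x' x z, h2, one_mul]

private lemma op_comm {A : Type*} [Ring A] {u v : A} (h : u * v = v * u) :
    ∀ x : A, u * (v * x) = v * (u * x) := fun x => by
  rw [← mul_assoc, h, mul_assoc]

private lemma op_smul {A : Type*} [Ring A] [Algebra ℂ A] {c : ℂ} {u v : A}
    (h : u * v = c • (v * u)) : ∀ x : A, u * (v * x) = c • (v * (u * x)) := fun x => by
  rw [← mul_assoc, h, smul_mul_assoc, mul_assoc]

theorem stmt13 {A : Type*} [Ring A] [Algebra ℂ A]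
    (Ym Zm Yn Zn : Aˣ) (q b : ℂ) (hq : q ≠ 0) (hb : b ≠ 0)
    (hYY : (Ym : A) * Yn = (Yn : A) * Ym)
    (hZZ : (Zm : A) * Zn = (Zn : A) * Zm)
    (hYZ : (Ym : A) * Zn = (Zn : A) * Ym)
    (hYZ' : (Yn : A) * Zm = (Zm : A) * Yn)
    (hm : (Zm : A) * Ym = q ^ 2 • ((Ym : A) * Zm))
    (hn : (Zn : A) * Yn = q ^ 2 • ((Yn : A) * Zn))
    (Dinv : A)
    (hD1 : Dinv * (b • ((Ym : A) * Yn) + (Zm : A) * Zn) = 1)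
    (hD2 : (b • ((Ym : A) * Yn) + (Zm : A) * Zn) * Dinv = 1)
    (Wm Wn : A)
    (hWm1 : (b • (Dinv * Ym)) * Wm = 1) (hWm2 : Wm * (b • (Dinv * Ym)) = 1)
    (hWn1 : (b • (Dinv * Yn)) * Wn = 1) (hWn2 : Wn * (b • (Dinv * Yn)) = 1) :
    (Dinv * Zn) * Wm * (Dinv * Zm) * Wn =
        (b⁻¹ ^ 2 * q ^ 6) • (↑((Ym * Zm⁻¹ * Yn * Zn⁻¹)⁻¹) : A) ∧
    (b = q ^ 3 →
      (Dinv * Zn) * Wm * (Dinv * Zm) * Wn = (↑((Ym * Zm⁻¹ * Yn * Zn⁻¹)⁻¹) : A)) := by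
  set ym : A := (Ym : A) with hym
  set zm : A := (Zm : A) with hzm
  set yn : A := (Yn : A) with hyn
  set zn : A := (Zn : A) with hzn
  set ym' : A := ((Ym⁻¹ : Aˣ) : A) with hym'
  set yn' : A := ((Yn⁻¹ : Aˣ) : A) with hyn'
  set D : A := b • (ym * yn) + zm * zn with hD
  have iym1 : ym * ym' = 1 := Units.mul_inv Ym
  have iym2 : ym' * ym = 1 := Units.inv_mul Ym
  have iyn1 : yn * yn' = 1 := Units.mul_inv Yn
  have iyn2 : yn' * yn = 1 := Units.inv_mul Yn
  -- derived commutations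
  have d1 : ym' * zn = zn * ym' := swap_comm' ym ym' zn iym1 iym2 hYZ.symm
  have d2 : yn' * zm = zm * yn' := swap_comm' yn yn' zm iyn1 iyn2 hYZ'.symm
  have d3a : ym' * yn = yn * ym' := swap_comm' ym ym' yn iym1 iym2 hYY.symm
  have d3 : yn' * ym' = ym' * yn' := swap_comm' yn yn' ym' iyn1 iyn2 d3a
  have d4 : yn' * ym = ym * yn' := swap_comm' yn yn' ym iyn1 iyn2 hYY
  -- q-relations
  have e1 : ym' * zm = q ^ 2 • (zm * ym') := swap_inv' (q ^ 2) ym ym' zm iym1 iym2 hm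
  have e2 : yn' * zn = q ^ 2 • (zn * yn') := swap_inv' (q ^ 2) yn yn' zn iyn1 iyn2 hn
  have hq2 : (q ^ 2) ≠ 0 := pow_ne_zero _ hq
  have hq4 : (q ^ 4) ≠ 0 := pow_ne_zero _ hq
  have e3 : zn * yn' = (q ^ 2)⁻¹ • (yn' * zn) := by
    rw [e2, smul_smul, inv_mul_cancel₀ hq2, one_smul]
  -- operator forms
  have hD1' : ∀ x : A, Dinv * (D * x) = x := fun x => by
    rw [← mul_assoc, hD, hD1, one_mul]
  have hD2' : ∀ x : A, D * (Dinv * x) = x := fun x => by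
    rw [← mul_assoc, hD, hD2, one_mul]
  have hDop : ∀ x : A, D * x = b • (ym * (yn * x)) + zn * (zm * x) := fun x => by
    rw [hD, add_mul, smul_mul_assoc, mul_assoc, hZZ, mul_assoc]
  -- key ∀x moves
  have hVWx : ∀ x : A, ym' * (yn' * (zn * (zm * x)))
      = (q ^ 4) • (zn * (zm * (ym' * (yn' * x)))) := fun x => by
    rw [op_smul e2 (zm * x), mul_smul_comm, op_comm d2 x,
      op_comm d1 (zm * (yn' * x)), op_smul e1 (yn' * x), mul_smul_comm,
      smul_smul]
    congr 1
    ring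
  have hWPx : ∀ x : A, zn * (zm * (ym * (yn * x)))
      = (q ^ 4) • (ym * (yn * (zn * (zm * x)))) := fun x => by
    rw [op_smul hm (yn * x), mul_smul_comm, op_comm hYZ.symm (zm * (yn * x)),
      op_comm hYZ'.symm x, op_smul hn (zm * x), mul_smul_comm,
      smul_smul]
    congr 1
    ring
  have hPVx : ∀ x : A, ym * (yn * (ym' * (yn' * x))) = x := fun x => by
    rw [op_comm d3a.symm (yn' * x), ← mul_assoc yn yn' x, iyn1, one_mul,
      ← mul_assoc, iym1, one_mul]
  have hVPx : ∀ x : A, ym' * (yn' * (ym * (yn * x))) = x := fun x => by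
    rw [op_comm d4 (yn * x), ← mul_assoc yn' yn x, iyn2, one_mul,
      ← mul_assoc, iym2, one_mul]
  have hPV1 : ym * (yn * (ym' * yn')) = 1 := by simpa using hPVx 1
  have hVP1 : ym' * (yn' * (ym * yn)) = 1 := by simpa using hVPx 1
  -- the key conjugation identity
  have hKey : ym' * (yn' * (zn * (zm * D)))
      = (q ^ 8) • (D * (zn * (zm * (ym' * yn')))) := by
    have hU : ym' * (yn' * D) = b • (1 : A) + (q ^ 4) • (zn * (zm * (ym' * yn'))) := by
      have h2 : ym' * (yn' * (zm * zn)) = (q ^ 4) • (zn * (zm * (ym' * yn'))) := by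
        rw [hZZ]; simpa using hVWx 1
      rw [hD, mul_add, mul_add, mul_smul_comm, mul_smul_comm,
        ← mul_assoc ym' yn' (ym * yn)]
      rw [mul_assoc ym' yn' (ym * yn), hVP1, ← mul_assoc ym' yn' (zm * zn),
        mul_assoc ym' yn' (zm * zn), h2]
    have h5 : zn * (zm * (ym * (yn * (ym' * yn')))) = zn * zm := by
      rw [hPV1, mul_one]
    have h3 : ym * (yn * (zn * (zm * (ym' * yn')))) = (q ^ 4)⁻¹ • (zn * zm) := by
      rw [← h5, hWPx (ym' * yn'), smul_smul, inv_mul_cancel₀ hq4, one_smul]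
    have hRHS : D * (zn * (zm * (ym' * yn')))
        = (b * (q ^ 4)⁻¹) • (zn * zm) + zn * (zm * (zn * (zm * (ym' * yn')))) := by
      rw [hDop, h3, smul_smul]
    have hLHS : ym' * (yn' * (zn * (zm * D)))
        = (q ^ 4 * b) • (zn * zm) + (q ^ 4 * q ^ 4) • (zn * (zm * (zn * (zm * (ym' * yn'))))) := by
      rw [hVWx D, hU, mul_add, mul_add, mul_smul_comm, mul_smul_comm,
        mul_smul_comm, mul_smul_comm, mul_one, smul_add, smul_smul, smul_smul]
    rw [hLHS, hRHS, smul_add, smul_smul,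
      show (q ^ 4 * b : ℂ) = q ^ 8 * (b * (q ^ 4)⁻¹) by field_simp,
      show (q ^ 4 * q ^ 4 : ℂ) = q ^ 8 by ring]
  -- identify Wm, Wn
  have hWmEq : Wm = b⁻¹ • (ym' * D) := by
    have key : (b • (Dinv * ym)) * (b⁻¹ • (ym' * D)) = 1 := by
      rw [smul_mul_assoc, mul_smul_comm, smul_smul, mul_inv_cancel₀ hb, one_smul,
        mul_assoc, ← mul_assoc ym ym' D, iym1, one_mul, hD, hD1]
    calc Wm = Wm * ((b • (Dinv * ym)) * (b⁻¹ • (ym' * D))) := by rw [key, mul_one]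
      _ = (Wm * (b • (Dinv * ym))) * (b⁻¹ • (ym' * D)) := by rw [mul_assoc]
      _ = b⁻¹ • (ym' * D) := by rw [hWm2, one_mul]
  have hWnEq : Wn = b⁻¹ • (yn' * D) := by
    have key : (b • (Dinv * yn)) * (b⁻¹ • (yn' * D)) = 1 := by
      rw [smul_mul_assoc, mul_smul_comm, smul_smul, mul_inv_cancel₀ hb, one_smul,
        mul_assoc, ← mul_assoc yn yn' D, iyn1, one_mul, hD, hD1]
    calc Wn = Wn * ((b • (Dinv * yn)) * (b⁻¹ • (yn' * D))) := by rw [key, mul_one]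
      _ = (Wn * (b • (Dinv * yn))) * (b⁻¹ • (yn' * D)) := by rw [mul_assoc]
      _ = b⁻¹ • (yn' * D) := by rw [hWn2, one_mul]
  -- main computation
  have hL : (Dinv * zn) * Wm * (Dinv * zm) * Wn
      = (b⁻¹ * b⁻¹ * ((q ^ 2)⁻¹ * q ^ 8)) • (zn * (zm * (ym' * yn'))) := by
    rw [hWmEq, hWnEq]
    have step1 : (Dinv * zn) * (b⁻¹ • (ym' * D)) * (Dinv * zm) * (b⁻¹ • (yn' * D))
        = (b⁻¹ * b⁻¹) • (Dinv * (zn * (ym' * (D * (Dinv * (zm * (yn' * D))))))) := by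
      simp only [mul_smul_comm, smul_mul_assoc, smul_smul, mul_assoc]
    rw [step1, hD2' (zm * (yn' * D)), op_comm d1.symm (zm * (yn' * D)),
      op_comm d2.symm D, op_smul e3 (zm * D)]
    simp only [mul_smul_comm, smul_smul]
    rw [hKey]
    simp only [mul_smul_comm, smul_smul, hD1']
    congr 1
    ring
  -- target identification
  have htar : (↑((Ym * Zm⁻¹ * Yn * Zn⁻¹)⁻¹) : A) = zn * (zm * (ym' * yn')) := by
    have : ((Ym * Zm⁻¹ * Yn * Zn⁻¹)⁻¹ : Aˣ) = Zn * Yn⁻¹ * Zm * Ym⁻¹ := by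
      simp [mul_inv_rev, mul_assoc]
    rw [this]
    push_cast [Units.val_mul]
    show zn * yn' * zm * ym' = zn * (zm * (ym' * yn'))
    rw [mul_assoc, mul_assoc, op_comm d2 ym', d3]
  constructor
  · rw [hL, htar]
    congr 1
    field_simp
  · intro hb3
    rw [hL, htar, hb3]
    have : ((q ^ 3)⁻¹ * (q ^ 3)⁻¹ * ((q ^ 2)⁻¹ * q ^ 8)) = (1 : ℂ) := by
      field_simp
    rw [this, one_smul]
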